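/- arXiv:1309.1001 — 3 statements merged into one kernel-verified Lean document; each statement's English description precedes it below -/
import Mathlib

section
/- Let H be a Tonelli Hamiltonian on T*M, M a closed connected manifold, and let h_{H̃} be the Peierls barrier of the lift H̃ to the universal cover M̃. If there exist x̃₁, x̃₂ ∈ M̃ such that h_{H̃}(x̃₁, x̃₂) < +∞, then h_{H̃}(z̃₁, z̃₂) < +∞ for all z̃₁, z̃₂ ∈ M̃. -/
/-!
# Statement 5

Let `H` be a Tonelli Hamiltonian on `T*M`, `M` a closed connected manifold, and let
`h_{H̃}` be the Peierls barrier of the lift `H̃` to the universal cover `M̃`.  If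
`h_{H̃}(x̃₁, x̃₂) < +∞` for some `x̃₁, x̃₂ ∈ M̃`, then `h_{H̃} < +∞` everywhere.

We axiomatize the lifted Lagrangian action on the universal cover `M̃` through its
finite-time potentials `h^T(x,y)` (the minimal Lagrangian action of absolutely continuous
curves from `x` to `y` in time `T > 0`), with the basic properties coming from the Tonelli
setting on a closed connected manifold: subadditivity under concatenation, the action
bound `A·d(x,y)` along unit-speed shortest geodesics (`A = sup_{‖v‖=1} L < ∞`), the action
bound along constant loops, and the finiteness from above of the critical value.  The Mañé
critical value `c_u(H)` of the universal cover and the Peierls barrier are then defined by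
their usual formulas.
-/

open Filter

/-- (The finite-time potentials of) the lift to the universal cover `M̃` of a Tonelli
Lagrangian system on a closed connected manifold. -/
structure TonelliCover where
  /-- the universal cover `M̃` -/
  Mt : Type
  [met : MetricSpace Mt]
  /-- `h^T_{H̃}(x,y)`: the minimal action `∫₀ᵀ L̃(γ,γ̇) dt` over absolutely continuous
  curves `γ : [0,T] → M̃` with `γ(0) = x`, `γ(T) = y` (for `T > 0`) -/
  hT : ℝ → Mt → Mt → ℝ
  /-- subadditivity under concatenation of curves -/
  hT_concat : ∀ T₁ T₂ : ℝ, 0 < T₁ → 0 < T₂ → ∀ x y z : Mt,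
    hT (T₁ + T₂) x z ≤ hT T₁ x y + hT T₂ y z
  /-- `A = sup_{‖v‖ = 1} L < ∞` -/
  geo_bound : ℝ
  /-- cost of unit-speed shortest geodesics -/
  hT_geo : ∀ x y : Mt, x ≠ y → hT (dist x y) x y ≤ geo_bound * dist x y
  /-- `max_x L(x,0) < ∞` -/
  const_bound : ℝ
  /-- cost of constant loops -/
  hT_const : ∀ T, 0 < T → ∀ x, hT T x x ≤ const_bound * T
  /-- there is `k` making the `(L̃+k)`-action of every loop nonnegative -/
  crit_nonempty : ∃ k : ℝ, ∀ T, 0 < T → ∀ x, 0 ≤ hT T x x + k * T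

attribute [instance] TonelliCover.met

namespace TonelliCover

/-- the Mañé critical value of the universal cover:
`c_u(H) = inf {k : A_{L̃+k}(γ) ≥ 0 for all absolutely continuous loops γ in M̃}`. -/
noncomputable def cu (S : TonelliCover) : ℝ :=
  sInf {k : ℝ | ∀ T, 0 < T → ∀ x, 0 ≤ S.hT T x x + k * T}

/-- the Peierls barrier
`h_{H̃}(x,y) = liminf_{T → ∞} (h^T_{H̃}(x,y) + c_u(H)·T) ∈ (-∞, +∞]`. -/
noncomputable def peierls (S : TonelliCover) (x y : S.Mt) : EReal :=
  liminf (fun T : ℝ => ((S.hT T x y + S.cu * T : ℝ) : EReal)) atTop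

end TonelliCover

/-- **Lemma 4.2.**  If `h_{H̃}(x̃₁, x̃₂) < +∞` for some `x̃₁, x̃₂ ∈ M̃`, then the Peierls
barrier `h_{H̃}` is finite everywhere. -/
theorem statement5 (S : TonelliCover) (x₁ x₂ : S.Mt)
    (h : S.peierls x₁ x₂ < ⊤) :
    ∀ z₁ z₂ : S.Mt, S.peierls z₁ z₂ < ⊤ := by
  -- For any two points there is a finite-time path with bounded cost.
  have key : ∀ z w : S.Mt, ∃ t C : ℝ, 0 < t ∧ S.hT t z w ≤ C := by
    intro z w
    by_cases hzw : z = w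
    · exact ⟨1, S.const_bound * 1, one_pos, hzw ▸ S.hT_const 1 one_pos w⟩
    · have hd : 0 < dist z w := dist_pos.2 hzw
      refine ⟨dist z w + 1, S.geo_bound * dist z w + S.const_bound * 1, by linarith, ?_⟩
      calc S.hT (dist z w + 1) z w ≤ S.hT (dist z w) z w + S.hT 1 w w :=
            S.hT_concat _ _ hd one_pos z w w
        _ ≤ S.geo_bound * dist z w + S.const_bound * 1 :=
            add_le_add (S.hT_geo z w hzw) (S.hT_const 1 one_pos w)
  intro z₁ z₂
  obtain ⟨t₁, C₁, ht₁, hC₁⟩ := key z₁ x₁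
  obtain ⟨t₂, C₂, ht₂, hC₂⟩ := key x₂ z₂
  -- From the hypothesis, extract a real `r` with the action frequently below `r`.
  obtain ⟨r, hr, -⟩ := EReal.exists_between_coe_real h
  have hfreq : ∃ᶠ T in atTop, ((S.hT T x₁ x₂ + S.cu * T : ℝ) : EReal) < (r : EReal) :=
    frequently_lt_of_liminf_lt (by isBoundedDefault) hr
  set M : ℝ := C₁ + r + C₂ + S.cu * (t₁ + t₂) with hM
  -- Frequently the shifted action is at most `M`.
  have hfreq' : ∃ᶠ T in atTop,
      ((S.hT T z₁ z₂ + S.cu * T : ℝ) : EReal) ≤ (M : EReal) := by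
    rw [frequently_atTop] at hfreq ⊢
    intro b
    obtain ⟨T, hTb, hTlt⟩ := hfreq (max b 1)
    have hT1 : (1 : ℝ) ≤ T := le_trans (le_max_right b 1) hTb
    have hT0 : 0 < T := lt_of_lt_of_le one_pos hT1
    refine ⟨t₁ + T + t₂, by
      have := le_trans (le_max_left b 1) hTb; linarith, ?_⟩
    have hlt : S.hT T x₁ x₂ + S.cu * T < r := by exact_mod_cast hTlt
    have hcat : S.hT (t₁ + T + t₂) z₁ z₂ ≤ C₁ + S.hT T x₁ x₂ + C₂ := by
      calc S.hT (t₁ + T + t₂) z₁ z₂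
          ≤ S.hT (t₁ + T) z₁ x₂ + S.hT t₂ x₂ z₂ :=
            S.hT_concat _ _ (by linarith) ht₂ z₁ x₂ z₂
        _ ≤ (S.hT t₁ z₁ x₁ + S.hT T x₁ x₂) + S.hT t₂ x₂ z₂ :=
            add_le_add_left (S.hT_concat _ _ ht₁ hT0 z₁ x₁ x₂) _
        _ ≤ C₁ + S.hT T x₁ x₂ + C₂ :=
            by linarith
    have : S.hT (t₁ + T + t₂) z₁ z₂ + S.cu * (t₁ + T + t₂) ≤ M := by
      have : S.cu * (t₁ + T + t₂) = S.cu * T + S.cu * (t₁ + t₂) := by ring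
      rw [hM]; nlinarith [hcat]
    exact_mod_cast this
  calc S.peierls z₁ z₂ ≤ (M : EReal) := liminf_le_of_frequently_le hfreq' (by isBoundedDefault)
    _ < ⊤ := EReal.coe_lt_top M
end

section
/- Let H̃ be the lift to T*M̃ of a Tonelli Hamiltonian H on T*M, M closed and connected. If there exists a pre-orbit between X₀ ∈ T*M̃ and X₁ ∈ T*M̃, then H̃(X₀) = H̃(X₁). -/
/-!
# Statement 10

Let `H̃` be the lift to `T*M̃` of a Tonelli Hamiltonian `H` on `T*M`, `M` closed and
connected.  If there exists a pre-orbit between `X₀ ∈ T*M̃` and `X₁ ∈ T*M̃`, then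
`H̃(X₀) = H̃(X₁)`.

We axiomatize the lifted Hamiltonian dynamics on the phase space `P = T*M̃`: the
Hamiltonian `H̃`, its flow `Φ^{H̃}`, and the evaluation `λ̃(X_{H̃})` of the lifted Liouville
form on the Hamiltonian vector field; `H̃` is Lipschitz on regions of bounded energy (such
regions project to compact subsets of `T*M`).  A pre-orbit between `X₀` and `X₁` is a
sequence of piecewise flow curves `Yₙ : [0,Tₙ] → T*M̃` with finitely many discontinuities,
`Tₙ → ∞`, endpoints converging to `X₀` and `X₁`, total jump size `Δ(Yₙ) → 0` and
equi-bounded energy.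
-/

open Filter

/-- The Hamiltonian dynamics of the lift `H̃` to `T*M̃` of a Tonelli Hamiltonian on a
closed connected manifold. -/
structure HamSystem (P : Type) [MetricSpace P] where
  /-- the lifted Hamiltonian `H̃` -/
  H : P → ℝ
  /-- the Hamiltonian flow `Φ^{H̃}` -/
  flow : ℝ → P → P
  /-- `λ̃(X_{H̃})`: the lifted Liouville form evaluated on the Hamiltonian vector field -/
  lambdaX : P → ℝ
  flow_zero : ∀ X, flow 0 X = X
  flow_add : ∀ s t X, flow (s + t) X = flow s (flow t X)
  /-- conservation of energy -/
  energy_const : ∀ t X, H (flow t X) = H X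
  H_cont : Continuous H
  lambdaX_cont : Continuous lambdaX
  flow_cont : Continuous fun q : ℝ × P => flow q.1 q.2
  /-- `H̃` is Lipschitz on each region of bounded energy -/
  H_locLip : ∀ K : ℝ, ∃ C : ℝ, ∀ X Y : P, H X ≤ K → H Y ≤ K →
    |H X - H Y| ≤ C * dist X Y

/-- The combinatorial data of a piecewise orbit `Yₙ : [0,T] → T*M̃`: jump times
`0 = t⁰ < t¹ < … < t^{N} < t^{N+1} = T` and the starting point `p i` of the flow segment on
`[tⁱ, tⁱ⁺¹)`; the curve is `Y(tⁱ + s) = Φ^{H̃}_s (p i)` for `0 ≤ s < tⁱ⁺¹ - tⁱ`, with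
`Y(T) = Y(T-)`. -/
structure PiecewiseData (P : Type) where
  T : ℝ
  /-- the number of discontinuities -/
  N : ℕ
  t : ℕ → ℝ
  p : ℕ → P
  t_zero : t 0 = 0
  t_last : t (N + 1) = T
  t_mono : ∀ i : ℕ, i ≤ N → t i < t (i + 1)

namespace HamSystem

variable {P : Type} [MetricSpace P]

/-- the endpoint `Y(T) = Y(T^{N+1}-)` of a piecewise orbit -/
def pieceStop (S : HamSystem P) (Y : PiecewiseData P) : P :=
  S.flow (Y.t (Y.N + 1) - Y.t Y.N) (Y.p Y.N)

/-- the total jump `Δ(Y) = ∑_{i=1}^{N} dist (Y(tⁱ-), Y(tⁱ))` of a piecewise orbit -/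
noncomputable def pieceJump (S : HamSystem P) (Y : PiecewiseData P) : ℝ :=
  ∑ i ∈ Finset.range Y.N, dist (S.flow (Y.t (i + 1) - Y.t i) (Y.p i)) (Y.p (i + 1))

/-- the Hamiltonian action `∫₀ᵀ (λ̃_{Y(t)}(Ẏ(t)) - (H̃(Y(t)) - k)) dt` of a piecewise
orbit (for the Hamiltonian `H̃ - k`) -/
noncomputable def pieceAction (S : HamSystem P) (k : ℝ) (Y : PiecewiseData P) : ℝ :=
  ∑ i ∈ Finset.range (Y.N + 1),
    ∫ s in (0:ℝ)..(Y.t (i + 1) - Y.t i),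
      (S.lambdaX (S.flow s (Y.p i)) - (S.H (S.flow s (Y.p i)) - k))

/-- A pre-orbit between `X₀` and `X₁`: a sequence of piecewise flow curves with `Tₙ → ∞`,
endpoints converging to `X₀` resp. `X₁`, total jump size tending to `0`, and equi-bounded
energy. -/
structure PreOrbit (S : HamSystem P) (X₀ X₁ : P) where
  Y : ℕ → PiecewiseData P
  tendsto_T : Tendsto (fun n => (Y n).T) atTop atTop
  tendsto_start : Tendsto (fun n => (Y n).p 0) atTop (nhds X₀)
  tendsto_stop : Tendsto (fun n => S.pieceStop (Y n)) atTop (nhds X₁)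
  tendsto_jump : Tendsto (fun n => S.pieceJump (Y n)) atTop (nhds 0)
  /-- equi-bounded energy: `H̃(Yₙ(s)) ≤ K` for all `n` and `s` -/
  energy_bdd : ∃ K : ℝ, ∀ n i, i ≤ (Y n).N → S.H ((Y n).p i) ≤ K

end HamSystem

/-- **Lemma 5.2.**  If there exists a pre-orbit between `X₀` and `X₁`, then
`H̃(X₀) = H̃(X₁)`. -/
theorem statement10 {P : Type} [MetricSpace P] (S : HamSystem P) (X₀ X₁ : P)
    (h : Nonempty (S.PreOrbit X₀ X₁)) : S.H X₀ = S.H X₁ := by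
  obtain ⟨O⟩ := h
  obtain ⟨K, hK⟩ := O.energy_bdd
  obtain ⟨C, hC⟩ := S.H_locLip K
  have key : ∀ n, |S.H (S.pieceStop (O.Y n)) - S.H ((O.Y n).p 0)|
      ≤ C * S.pieceJump (O.Y n) := by
    intro n
    set Y := O.Y n with hY
    have hstop : S.H (S.pieceStop Y) = S.H (Y.p Y.N) := S.energy_const _ _
    rw [hstop]
    have htel : S.H (Y.p Y.N) - S.H (Y.p 0)
        = ∑ i ∈ Finset.range Y.N, (S.H (Y.p (i + 1)) - S.H (Y.p i)) :=
      (Finset.sum_range_sub (fun i => S.H (Y.p i)) Y.N).symm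
    rw [htel]
    calc |∑ i ∈ Finset.range Y.N, (S.H (Y.p (i + 1)) - S.H (Y.p i))|
        ≤ ∑ i ∈ Finset.range Y.N, |S.H (Y.p (i + 1)) - S.H (Y.p i)| :=
          Finset.abs_sum_le_sum_abs _ _
      _ ≤ ∑ i ∈ Finset.range Y.N,
            C * dist (S.flow (Y.t (i + 1) - Y.t i) (Y.p i)) (Y.p (i + 1)) := by
          apply Finset.sum_le_sum
          intro i hi
          rw [Finset.mem_range] at hi
          have h1 : S.H (Y.p i) = S.H (S.flow (Y.t (i + 1) - Y.t i) (Y.p i)) :=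
            (S.energy_const _ _).symm
          rw [h1, abs_sub_comm]
          exact hC _ _ (by rw [S.energy_const]; exact hK n i hi.le) (hK n (i + 1) hi)
      _ = C * S.pieceJump Y := by rw [HamSystem.pieceJump, Finset.mul_sum]
  have h1 : Tendsto (fun n => S.H (S.pieceStop (O.Y n))) atTop (nhds (S.H X₁)) :=
    (S.H_cont.tendsto X₁).comp O.tendsto_stop
  have h0 : Tendsto (fun n => S.H ((O.Y n).p 0)) atTop (nhds (S.H X₀)) :=
    (S.H_cont.tendsto X₀).comp O.tendsto_start
  have hdiff : Tendsto (fun n => |S.H (S.pieceStop (O.Y n)) - S.H ((O.Y n).p 0)|)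
      atTop (nhds |S.H X₁ - S.H X₀|) := (h1.sub h0).abs
  have hrhs : Tendsto (fun n => C * S.pieceJump (O.Y n)) atTop (nhds 0) := by
    simpa using O.tendsto_jump.const_mul C
  have hle : |S.H X₁ - S.H X₀| ≤ 0 :=
    le_of_tendsto_of_tendsto hdiff hrhs (Filter.Eventually.of_forall key)
  have := sub_eq_zero.mp (abs_nonpos_iff.mp hle)
  linarith
end

section
/- Let G be the Heisenberg group (ℝ³ with product (x,y,z)⋆(x',y',z') = (x+x', y+y', z+z'+xy')), Γ the integer lattice, Z ⊂ Γ its center (elements (0,0,n), n ∈ ℤ), and M̄ = Z\G the abelian cover of M = Γ\G. For the Lagrangian L = ½(ẋ² + ẏ² + (ż − xẏ)²) + ż − xẏ, the projected Aubry set of the lifted system on the abelian cover is all of M̄: 𝒜_{H̄} = M̄. Equivalently, h_{H̄}(p,p) = 0 for all p ∈ M̄. -/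
/-!
# Statement 18

Let `G` be the Heisenberg group (`ℝ³` with product
`(x,y,z)⋆(x',y',z') = (x+x', y+y', z+z'+xy')`), `Γ` the integer lattice, `Z ⊆ Γ` its
center (the elements `(0,0,n)`, `n ∈ ℤ`), and `M̄ = Z\G` the abelian cover of `M = Γ\G`.
For the Lagrangian `L = ½(ẋ² + ẏ² + (ż - xẏ)²) + ż - xẏ`, the projected Aubry set of
the lifted system on the abelian cover is all of `M̄`: `𝒜_{H̄} = M̄`; equivalently,
`h_{H̄}(p,p) = 0` for every `p ∈ M̄`.

The center acts on `G ≅ ℝ³` by `(0,0,n)⋆(x,y,z) = (x,y,z+n)`, so the abelian cover is the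
quotient of `ℝ³` by the translations `(0,0,n)`, `n ∈ ℤ`; we work with representatives in
`ℝ³`: a curve of `M̄` from `p` to `q` is a curve of `ℝ³` from `p` to `q + (0,0,n)` for
some `n ∈ ℤ`, and loops of `M̄` are the curves with `γ(T) = γ(0) + (0,0,n)`.  The Mañé
critical value of the abelian cover is
`c_a = inf {k : A_{L+k}(γ) ≥ 0 for every absolutely continuous loop γ of M̄}`, and the
Peierls barrier on `M̄` is `h_{H̄}(p,q) = liminf_{T→∞} (h^T_{H̄}(p,q) + c_a T)`.
-/

open Filter

/-- points of the Heisenberg group `G ≅ ℝ³` -/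
abbrev HeisPt : Type := ℝ × ℝ × ℝ

/-- the left-invariant Tonelli Lagrangian `L = ½(ẋ² + ẏ² + (ż - xẏ)²) + ż - xẏ` -/
noncomputable def heisL (p v : HeisPt) : ℝ :=
  (v.1 ^ 2 + v.2.1 ^ 2 + (v.2.2 - p.1 * v.2.1) ^ 2) / 2 + v.2.2 - p.1 * v.2.1

/-- `γ : [0,T] → ℝ³` is an absolutely continuous curve with derivative `v` and integrable
Lagrangian `L`-action -/
def IsACCurve (L : HeisPt → HeisPt → ℝ) (T : ℝ) (γ v : ℝ → HeisPt) : Prop :=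
  IntervalIntegrable v MeasureTheory.volume 0 T ∧
  (∀ t ∈ Set.Icc (0:ℝ) T, γ t = γ 0 + ∫ s in (0:ℝ)..t, v s) ∧
  IntervalIntegrable (fun t => L (γ t) (v t)) MeasureTheory.volume 0 T

/-- the Lagrangian action `A_L(γ) = ∫₀ᵀ L(γ, γ̇) dt` -/
noncomputable def curveAction (L : HeisPt → HeisPt → ℝ) (T : ℝ) (γ v : ℝ → HeisPt) : ℝ :=
  ∫ t in (0:ℝ)..T, L (γ t) (v t)

/-- the deck transformations of `ℝ³ → M̄ = Z\G`: the central translations `(0,0,n)` -/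
def deck (n : ℤ) : HeisPt := ((0:ℝ), (0:ℝ), (n:ℝ))

/-- the finite-time potential `h^T_{H̄}(p,q)` on the abelian cover `M̄` (computed with
representatives in `ℝ³`): the minimal `L`-action over absolutely continuous curves from
`p` to a representative of `q` in time `T` -/
noncomputable def hTimeAb (L : HeisPt → HeisPt → ℝ) (T : ℝ) (p q : HeisPt) : ℝ :=
  sInf {a : ℝ | ∃ γ v : ℝ → HeisPt, ∃ n : ℤ,
    IsACCurve L T γ v ∧ γ 0 = p ∧ γ T = q + deck n ∧ a = curveAction L T γ v}

/-- the Mañé critical value `c_a` of the abelian cover: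
`c_a = inf {k : A_{L+k}(γ) ≥ 0 for every absolutely continuous loop γ of M̄}` -/
noncomputable def maneCa (L : HeisPt → HeisPt → ℝ) : ℝ :=
  sInf {k : ℝ | ∀ T, 0 < T → ∀ γ v : ℝ → HeisPt, IsACCurve L T γ v →
    (∃ n : ℤ, γ T = γ 0 + deck n) → 0 ≤ curveAction L T γ v + k * T}

/-- the Peierls barrier `h_{H̄}(p,q) = liminf_{T→∞} (h^T_{H̄}(p,q) + c_a T)` of the system
lifted to the abelian cover -/
noncomputable def peierlsAb (L : HeisPt → HeisPt → ℝ) (p q : HeisPt) : EReal :=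
  liminf (fun T : ℝ => ((hTimeAb L T p q + maneCa L * T : ℝ) : EReal)) atTop

lemma heisL_ge (p v : HeisPt) : -(1/2) ≤ heisL p v := by
  unfold heisL
  nlinarith [sq_nonneg v.1, sq_nonneg v.2.1, sq_nonneg (v.2.2 - p.1 * v.2.1 + 1)]

lemma action_ge {T : ℝ} (hT : 0 ≤ T) {γ v : ℝ → HeisPt} (h : IsACCurve heisL T γ v) :
    -(T/2) ≤ curveAction heisL T γ v := by
  have hmono := intervalIntegral.integral_mono_on hT
    (intervalIntegrable_const (c := (-(1/2) : ℝ))) h.2.2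
    (fun t _ => heisL_ge (γ t) (v t))
  have h1 : (∫ _t in (0:ℝ)..T, (-(1/2):ℝ)) = -(T/2) := by
    simp; ring
  rw [h1] at hmono
  exact hmono

/-- the "vertical spiral" curve through `p` -/
noncomputable def spiral (p : HeisPt) (t : ℝ) : HeisPt := p + ((0:ℝ), (0:ℝ), -t)

/-- derivative of the spiral -/
noncomputable def dspiral : ℝ → HeisPt := fun _ => ((0:ℝ), (0:ℝ), (-1:ℝ))

lemma spiral_zero (p : HeisPt) : spiral p 0 = p := by
  simp [spiral, Prod.ext_iff]

lemma heisL_spiral (p : HeisPt) (t s : ℝ) :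
    heisL (spiral p t) (dspiral s) = -(1/2) := by
  simp [heisL, spiral, dspiral]
  ring

lemma spiral_AC (p : HeisPt) (T : ℝ) : IsACCurve heisL T (spiral p) dspiral := by
  refine ⟨intervalIntegrable_const, ?_, ?_⟩
  · intro t _
    rw [spiral_zero]
    simp only [dspiral, intervalIntegral.integral_const]
    simp [spiral, Prod.ext_iff]
  · have : (fun t => heisL (spiral p t) (dspiral t)) = fun _ => (-(1/2):ℝ) := by
      funext t; exact heisL_spiral p t t
    rw [this]
    exact intervalIntegrable_const

lemma spiral_action (p : HeisPt) (T : ℝ) :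
    curveAction heisL T (spiral p) dspiral = -(T/2) := by
  unfold curveAction
  have : (fun t => heisL (spiral p t) (dspiral t)) = fun _ => (-(1/2):ℝ) := by
    funext t; exact heisL_spiral p t t
  rw [this]
  simp; ring

lemma maneCa_heisL : maneCa heisL = 1/2 := by
  unfold maneCa
  have hmem : (1/2:ℝ) ∈ {k : ℝ | ∀ T, 0 < T → ∀ γ v : ℝ → HeisPt, IsACCurve heisL T γ v →
      (∃ n : ℤ, γ T = γ 0 + deck n) → 0 ≤ curveAction heisL T γ v + k * T} := by
    intro T hT γ v hAC _
    have := action_ge hT.le hAC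
    linarith
  have hlb : ∀ k ∈ {k : ℝ | ∀ T, 0 < T → ∀ γ v : ℝ → HeisPt, IsACCurve heisL T γ v →
      (∃ n : ℤ, γ T = γ 0 + deck n) → 0 ≤ curveAction heisL T γ v + k * T}, (1/2:ℝ) ≤ k := by
    intro k hk
    have hloop : ∃ n : ℤ, spiral 0 1 = spiral 0 0 + deck n := by
      refine ⟨-1, ?_⟩
      simp [spiral, deck, Prod.ext_iff]
    have := hk 1 one_pos (spiral 0) dspiral (spiral_AC 0 1) hloop
    rw [spiral_action] at this
    linarith
  exact le_antisymm (csInf_le ⟨1/2, hlb⟩ hmem) (le_csInf ⟨1/2, hmem⟩ hlb)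

lemma hTimeAb_nonempty (p : HeisPt) (T : ℝ) :
    ∃ a, a ∈ {a : ℝ | ∃ γ v : ℝ → HeisPt, ∃ n : ℤ,
      IsACCurve heisL T γ v ∧ γ 0 = p ∧ γ T = p + deck n ∧
      a = curveAction heisL T γ v} := by
  refine ⟨0, fun _ => p, fun _ => 0, 0, ⟨intervalIntegrable_const, ?_, ?_⟩, rfl, ?_, ?_⟩
  · intro t _; simp
  · have : (fun _t : ℝ => heisL p 0) = fun _ => (0:ℝ) := by
      funext t; simp [heisL]
    rw [this]; exact intervalIntegrable_const
  · simp [deck, Prod.ext_iff]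
  · unfold curveAction
    have : (fun _t : ℝ => heisL p 0) = fun _ => (0:ℝ) := by
      funext t; simp [heisL]
    rw [this]; simp

lemma hTimeAb_bddBelow (p : HeisPt) {T : ℝ} (hT : 0 ≤ T) :
    ∀ a ∈ {a : ℝ | ∃ γ v : ℝ → HeisPt, ∃ n : ℤ,
      IsACCurve heisL T γ v ∧ γ 0 = p ∧ γ T = p + deck n ∧
      a = curveAction heisL T γ v}, -(T/2) ≤ a := by
  rintro a ⟨γ, v, n, hAC, _, _, rfl⟩
  exact action_ge hT hAC

lemma hTimeAb_ge (p : HeisPt) {T : ℝ} (hT : 0 ≤ T) :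
    -(T/2) ≤ hTimeAb heisL T p p :=
  le_csInf (hTimeAb_nonempty p T) (hTimeAb_bddBelow p hT)

lemma hTimeAb_le (p : HeisPt) (n : ℕ) :
    hTimeAb heisL (n : ℝ) p p ≤ -((n:ℝ)/2) := by
  apply csInf_le ⟨-((n:ℝ)/2), hTimeAb_bddBelow p (by positivity)⟩
  refine ⟨spiral p, dspiral, -(n:ℤ), spiral_AC p n, spiral_zero p, ?_, (spiral_action p n).symm⟩
  simp [spiral, deck, Prod.ext_iff]

lemma peierls_self (p : HeisPt) : peierlsAb heisL p p = 0 := by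
  unfold peierlsAb
  rw [maneCa_heisL]
  apply le_antisymm
  · apply Filter.liminf_le_of_frequently_le'
    rw [Filter.frequently_atTop]
    intro b
    refine ⟨(⌈b⌉₊ : ℝ), Nat.le_ceil b, ?_⟩
    have h1 := hTimeAb_le p ⌈b⌉₊
    have : hTimeAb heisL (⌈b⌉₊ : ℝ) p p + 1/2 * (⌈b⌉₊ : ℝ) ≤ 0 := by linarith
    exact_mod_cast EReal.coe_le_coe_iff.2 this
  · apply Filter.le_liminf_of_le (by isBoundedDefault)
    filter_upwards [Filter.eventually_ge_atTop (0:ℝ)] with T hT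
    have h1 := hTimeAb_ge p hT
    have : (0:ℝ) ≤ hTimeAb heisL T p p + 1/2 * T := by linarith
    exact_mod_cast EReal.coe_le_coe_iff.2 this

/-- **Lemma 6.4.**  For the Heisenberg nilmanifold example, the projected Aubry set of the
system lifted to the abelian cover `M̄ = Z\G` is all of `M̄`:
`𝒜_{H̄} = {p : h_{H̄}(p,p) = 0} = M̄`, i.e. `h_{H̄}(p,p) = 0` for every point. -/
theorem statement18 :
    {p : HeisPt | peierlsAb heisL p p = 0} = Set.univ := by
  ext p
  simp [peierls_self p]
end
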